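/- arXiv:1904.09016 — 4 statements merged into one kernel-verified Lean document; each statement's English description precedes it below -/
import Mathlib

section
/- Let a, b > 0 with a + b < 1. If u, v ≥ 0 satisfy u²/(1+u) ≤ a·u + b·v and v²/(1+v) ≤ a·v + b·u, then u ≤ (a+b)/(1−a−b) and v ≤ (a+b)/(1−a−b). -/
lemma aux_bound (c u : ℝ) (hc : 0 < c) (hc1 : c < 1) (hu : 0 ≤ u)
    (h : u ^ 2 / (1 + u) ≤ c * u) : u ≤ c / (1 - c) := by
  have h1u : (0:ℝ) < 1 + u := by linarith
  rw [div_le_iff₀ h1u] at h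
  rw [le_div_iff₀ (by linarith : (0:ℝ) < 1 - c)]
  nlinarith [mul_nonneg hu hu]

theorem stmt_0 (a b u v : ℝ) (ha : 0 < a) (hb : 0 < b) (hab : a + b < 1)
    (hu : 0 ≤ u) (hv : 0 ≤ v)
    (h1 : u ^ 2 / (1 + u) ≤ a * u + b * v) (h2 : v ^ 2 / (1 + v) ≤ a * v + b * u) :
    u ≤ (a + b) / (1 - a - b) ∧ v ≤ (a + b) / (1 - a - b) := by
  have hab0 : 0 < a + b := by linarith
  have key : ∀ x y : ℝ, 0 ≤ x → 0 ≤ y → y ≤ x →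
      x ^ 2 / (1 + x) ≤ a * x + b * y → x ≤ (a + b) / (1 - a - b) := by
    intro x y hx hy hyx hle
    have : x ^ 2 / (1 + x) ≤ (a + b) * x := by nlinarith
    have := aux_bound (a + b) x hab0 hab hx this
    convert this using 2; ring
  rcases le_total v u with h | h
  · have hub := key u v hu hv h h1
    exact ⟨hub, le_trans h hub⟩
  · have hvb := key v u hv hu h h2
    exact ⟨le_trans h hvb, hvb⟩
end

section
/- Let ψ : D → ℝ be a standard self-concordant function on an open convex set D ⊆ ℝᵖ with positive definite Hessian everywhere, and let x* ∈ D satisfy ∇ψ(x*) = 0. If x̃ ∈ D satisfies ‖∇ψ(x̃)‖*_{x̃} ≤ δ/(1+δ) for some δ ∈ [0,1), then ‖x̃ − x*‖_{x̃} ≤ δ, where ‖u‖_{x̃} := (uᵀ∇²ψ(x̃)u)^{1/2} and ‖v‖*_{x̃} := (vᵀ∇²ψ(x̃)⁻¹v)^{1/2}. -/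
open scoped RealInnerProductSpace

lemma aux_mono7 {f f' : ℝ → ℝ}
    (hd : ∀ t ∈ Set.Icc (0:ℝ) 1, HasDerivAt f (f' t) t)
    (hnn : ∀ t ∈ Set.Icc (0:ℝ) 1, 0 ≤ f' t) :
    ∀ t ∈ Set.Icc (0:ℝ) 1, f 0 ≤ f t := by
  have hmono : MonotoneOn f (Set.Icc 0 1) := by
    apply monotoneOn_of_deriv_nonneg (convex_Icc 0 1)
    · exact fun t ht => (hd t ht).continuousAt.continuousWithinAt
    · intro t ht
      rw [interior_Icc] at ht
      exact ((hd t (Set.mem_Icc_of_Ioo ht)).differentiableAt).differentiableWithinAt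
    · intro t ht
      rw [interior_Icc] at ht
      rw [(hd t (Set.mem_Icc_of_Ioo ht)).deriv]
      exact hnn t (Set.mem_Icc_of_Ioo ht)
  intro t ht
  exact hmono (Set.left_mem_Icc.2 zero_le_one) ht ht.1

set_option maxHeartbeats 1000000 in
theorem stmt_7 {p : ℕ}
    (D : Set (EuclideanSpace ℝ (Fin p))) (hD : IsOpen D) (hDconv : Convex ℝ D)
    (ψ : EuclideanSpace ℝ (Fin p) → ℝ)
    (g : EuclideanSpace ℝ (Fin p) → EuclideanSpace ℝ (Fin p))
    (H : EuclideanSpace ℝ (Fin p) → EuclideanSpace ℝ (Fin p) →L[ℝ] EuclideanSpace ℝ (Fin p))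
    (T : EuclideanSpace ℝ (Fin p) →
      EuclideanSpace ℝ (Fin p) →L[ℝ] EuclideanSpace ℝ (Fin p) →L[ℝ] EuclideanSpace ℝ (Fin p))
    (hgrad : ∀ x ∈ D, HasGradientAt ψ (g x) x)
    (hhess : ∀ x ∈ D, HasFDerivAt g (H x) x)
    (hthird : ∀ x ∈ D, HasFDerivAt H (T x) x)
    (hsym : ∀ x ∈ D, ∀ u v, ⟪H x u, v⟫ = ⟪u, H x v⟫)
    (hpos : ∀ x ∈ D, ∀ u, u ≠ 0 → 0 < ⟪H x u, u⟫)
    (hsc : ∀ x ∈ D, ∀ u, |⟪T x u u, u⟫| ≤ 2 * Real.sqrt ⟪H x u, u⟫ ^ 3)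
    (xstar : EuclideanSpace ℝ (Fin p)) (hxstar : xstar ∈ D) (hcrit : g xstar = 0)
    (xt : EuclideanSpace ℝ (Fin p)) (hxt : xt ∈ D)
    (Hinv : EuclideanSpace ℝ (Fin p) →L[ℝ] EuclideanSpace ℝ (Fin p))
    (hHinv : ∀ v, H xt (Hinv v) = v) (hHinv' : ∀ v, Hinv (H xt v) = v)
    (δ : ℝ) (hδ0 : 0 ≤ δ) (hδ1 : δ < 1)
    (hacc : Real.sqrt ⟪Hinv (g xt), g xt⟫ ≤ δ / (1 + δ)) :
    Real.sqrt ⟪H xt (xt - xstar), xt - xstar⟫ ≤ δ := by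
  by_cases hne : xstar = xt
  · subst hne
    simp [sub_self, Real.sqrt_zero]
    exact hδ0
  set h : EuclideanSpace ℝ (Fin p) := xstar - xt with h_def
  have hh : h ≠ 0 := sub_ne_zero.2 hne
  set c : ℝ → EuclideanSpace ℝ (Fin p) := fun t => xt + t • h with c_def
  have hc : ∀ t ∈ Set.Icc (0:ℝ) 1, c t ∈ D := by
    intro t ht
    have he : c t = (1 - t) • xt + t • xstar := by
      simp only [c_def, h_def]; module
    rw [he]
    exact hDconv hxt hxstar (by linarith [ht.2]) ht.1 (by ring)
  have hcder : ∀ t : ℝ, HasDerivAt c h t := by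
    intro t
    have : HasDerivAt (fun s : ℝ => s • h) ((1:ℝ) • h) t :=
      (hasDerivAt_id t).smul_const h
    simpa [c_def] using this.const_add xt
  set q : ℝ → ℝ := fun t => ⟪H (c t) h, h⟫ with q_def
  set q' : ℝ → ℝ := fun t => ⟪T (c t) h h, h⟫ with q'_def
  have hq_pos : ∀ t ∈ Set.Icc (0:ℝ) 1, 0 < q t := fun t ht => hpos _ (hc t ht) h hh
  have hqd : ∀ t ∈ Set.Icc (0:ℝ) 1, HasDerivAt q (q' t) t := by
    intro t ht
    have h1 : HasDerivAt (fun s => H (c s)) (T (c t) h) t :=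
      (hthird _ (hc t ht)).comp_hasDerivAt t (hcder t)
    have h2 : HasDerivAt (fun s => H (c s) h) (T (c t) h h) t := by
      simpa using h1.clm_apply (hasDerivAt_const t h)
    simpa [q_def, q'_def] using HasDerivAt.inner ℝ h2 (hasDerivAt_const t h)
  have hq'bound : ∀ t ∈ Set.Icc (0:ℝ) 1, |q' t| ≤ 2 * Real.sqrt (q t) ^ 3 :=
    fun t ht => hsc _ (hc t ht) h
  have hq0 : q 0 = ⟪H xt h, h⟫ := by simp [q_def, c_def]
  set σ0 : ℝ := Real.sqrt (q 0) with σ0_def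
  have hσ0pos : 0 < σ0 :=
    Real.sqrt_pos.2 (hq_pos 0 ⟨le_refl 0, zero_le_one⟩)
  set u0 : ℝ := σ0⁻¹ with u0_def
  have hu0pos : 0 < u0 := inv_pos.2 hσ0pos
  -- step 1 : (√ q t)⁻¹ ≤ u0 + t on [0,1]
  have step1 : ∀ t ∈ Set.Icc (0:ℝ) 1, (Real.sqrt (q t))⁻¹ ≤ u0 + t := by
    set w : ℝ → ℝ := fun t => u0 + t - (Real.sqrt (q t))⁻¹ with w_def
    set w' : ℝ → ℝ := fun t =>
      1 - -(q' t / (2 * Real.sqrt (q t))) / Real.sqrt (q t) ^ 2 with w'_def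
    have hwd : ∀ t ∈ Set.Icc (0:ℝ) 1, HasDerivAt w (w' t) t := by
      intro t ht
      have hqt := hq_pos t ht
      have hs : Real.sqrt (q t) ≠ 0 := ne_of_gt (Real.sqrt_pos.2 hqt)
      have h1 : HasDerivAt (fun y => (Real.sqrt (q y))⁻¹)
          (-(q' t / (2 * Real.sqrt (q t))) / Real.sqrt (q t) ^ 2) t :=
        ((hqd t ht).sqrt (ne_of_gt hqt)).inv hs
      exact ((hasDerivAt_id t).const_add u0).sub h1
    have hwnn : ∀ t ∈ Set.Icc (0:ℝ) 1, 0 ≤ w' t := by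
      intro t ht
      have hqt := hq_pos t ht
      have hs : 0 < Real.sqrt (q t) := Real.sqrt_pos.2 hqt
      have habs : |(-(q' t / (2 * Real.sqrt (q t))) / Real.sqrt (q t) ^ 2)| ≤ 1 := by
        rw [abs_div, abs_neg, abs_div, abs_of_pos (by positivity : (0:ℝ) < 2 * Real.sqrt (q t)),
          abs_of_pos (by positivity : (0:ℝ) < Real.sqrt (q t) ^ 2), div_div]
        rw [div_le_one (by positivity)]
        calc |q' t| ≤ 2 * Real.sqrt (q t) ^ 3 := hq'bound t ht
          _ = 2 * Real.sqrt (q t) * Real.sqrt (q t) ^ 2 := by ring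
      have := (le_abs_self _).trans habs
      simp only [w'_def]
      linarith
    have := aux_mono7 hwd hwnn
    intro t ht
    have h0 : w 0 = 0 := by simp [w_def, u0_def, σ0_def]
    have := this t ht
    rw [h0] at this
    simp only [w_def] at this
    linarith
  -- step 2 : lower bound on q
  have step2 : ∀ t ∈ Set.Icc (0:ℝ) 1, ((u0 + t)⁻¹) ^ 2 ≤ q t := by
    intro t ht
    have hqt := hq_pos t ht
    have hs : 0 < Real.sqrt (q t) := Real.sqrt_pos.2 hqt
    have hpos' : 0 < u0 + t := by linarith [ht.1]
    have h1 : (u0 + t)⁻¹ ≤ Real.sqrt (q t) := by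
      have := inv_anti₀ (inv_pos.2 hs) (step1 t ht)
      rwa [inv_inv] at this
    have h2 := pow_le_pow_left₀ (by positivity) h1 2
    rwa [Real.sq_sqrt hqt.le] at h2
  -- step 3 : the gradient inequality
  set φ : ℝ → ℝ := fun t => ⟪g (c t), h⟫ with φ_def
  have hφd : ∀ t ∈ Set.Icc (0:ℝ) 1, HasDerivAt φ (q t) t := by
    intro t ht
    have h1 : HasDerivAt (fun s => g (c s)) (H (c t) h) t :=
      (hhess _ (hc t ht)).comp_hasDerivAt t (hcder t)
    simpa [φ_def, q_def] using HasDerivAt.inner ℝ h1 (hasDerivAt_const t h)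
  have key : σ0 ^ 2 / (1 + σ0) ≤ -⟪g xt, h⟫ := by
    set G : ℝ → ℝ := fun t => φ t + (u0 + t)⁻¹ with G_def
    set G' : ℝ → ℝ := fun t => q t + -1 / (u0 + t) ^ 2 with G'_def
    have hGd : ∀ t ∈ Set.Icc (0:ℝ) 1, HasDerivAt G (G' t) t := by
      intro t ht
      have hpos' : u0 + t ≠ 0 := by have := ht.1; positivity
      have h1 : HasDerivAt (fun y => (u0 + y)⁻¹) (-1 / (u0 + t) ^ 2) t :=
        ((hasDerivAt_id t).const_add u0).inv hpos'
      exact (hφd t ht).add h1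
    have hGnn : ∀ t ∈ Set.Icc (0:ℝ) 1, 0 ≤ G' t := by
      intro t ht
      have h2 := step2 t ht
      have hpos' : 0 < u0 + t := by linarith [ht.1]
      have he : -1 / (u0 + t) ^ 2 = -(((u0 + t)⁻¹) ^ 2) := by
        field_simp
      simp only [G'_def, he]
      linarith
    have hG := aux_mono7 hGd hGnn 1 (Set.right_mem_Icc.2 zero_le_one)
    have hc1 : c 1 = xstar := by simp [c_def, h_def]
    have hφ1 : φ 1 = 0 := by simp [φ_def, hc1, hcrit]
    have hφ0 : φ 0 = ⟪g xt, h⟫ := by simp [φ_def, c_def]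
    simp only [G_def, hφ1, hφ0] at hG
    have heq : u0⁻¹ - (u0 + 1)⁻¹ = σ0 ^ 2 / (1 + σ0) := by
      rw [u0_def]
      field_simp
      ring
    have hz : (u0 + 0 : ℝ)⁻¹ = u0⁻¹ := by rw [add_zero]
    have hG' : u0⁻¹ - (u0 + 1)⁻¹ ≤ -⟪g xt, h⟫ := by linarith [hG, hz]
    rw [← heq]
    exact hG'
  -- Cauchy–Schwarz for the Hessian form
  have hnn : ∀ w, 0 ≤ ⟪H xt w, w⟫ := by
    intro w
    rcases eq_or_ne w 0 with rfl | hw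
    · simp
    · exact (hpos xt hxt w hw).le
  have CS : ∀ u v : EuclideanSpace ℝ (Fin p),
      ⟪H xt u, v⟫ ≤ Real.sqrt ⟪H xt u, u⟫ * Real.sqrt ⟪H xt v, v⟫ := by
    intro u v
    have hsymuv : ⟪H xt v, u⟫ = ⟪H xt u, v⟫ := by
      rw [hsym xt hxt v u, real_inner_comm]
    have hquad : ∀ t : ℝ,
        0 ≤ ⟪H xt v, v⟫ * (t * t) + (2 * ⟪H xt u, v⟫) * t + ⟪H xt u, u⟫ := by
      intro t
      have e : ⟪H xt (u + t • v), u + t • v⟫ =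
          ⟪H xt v, v⟫ * (t * t) + (2 * ⟪H xt u, v⟫) * t + ⟪H xt u, u⟫ := by
        rw [map_add, map_smul]
        simp only [inner_add_left, inner_add_right, real_inner_smul_left,
          real_inner_smul_right, hsymuv]
        ring
      rw [← e]
      exact hnn _
    have hd := discrim_le_zero hquad
    rw [discrim] at hd
    have hsq : ⟪H xt u, v⟫ ^ 2 ≤ ⟪H xt u, u⟫ * ⟪H xt v, v⟫ := by nlinarith [hd]
    calc ⟪H xt u, v⟫ ≤ |⟪H xt u, v⟫| := le_abs_self _
      _ = Real.sqrt (⟪H xt u, v⟫ ^ 2) := (Real.sqrt_sq_eq_abs _).symm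
      _ ≤ Real.sqrt (⟪H xt u, u⟫ * ⟪H xt v, v⟫) := Real.sqrt_le_sqrt hsq
      _ = _ := Real.sqrt_mul (hnn u) _
  -- combine
  have hCS2 : -⟪g xt, h⟫ ≤ δ / (1 + δ) * σ0 := by
    have h1 : -⟪g xt, h⟫ = ⟪H xt (Hinv (g xt)), -h⟫ := by
      rw [hHinv, inner_neg_right]
    have h2 := CS (Hinv (g xt)) (-h)
    have h3 : ⟪H xt (Hinv (g xt)), Hinv (g xt)⟫ = ⟪Hinv (g xt), g xt⟫ := by
      rw [hHinv, real_inner_comm]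
    have h4 : ⟪H xt (-h), -h⟫ = q 0 := by
      rw [map_neg, inner_neg_neg, hq0]
    rw [h3, h4] at h2
    rw [h1]
    calc ⟪H xt (Hinv (g xt)), -h⟫ ≤ Real.sqrt ⟪Hinv (g xt), g xt⟫ * Real.sqrt (q 0) := h2
      _ ≤ δ / (1 + δ) * σ0 := by
          apply mul_le_mul_of_nonneg_right hacc (Real.sqrt_nonneg _)
  have hfinal : σ0 ≤ δ := by
    have hA : σ0 ^ 2 / (1 + σ0) ≤ δ / (1 + δ) * σ0 := key.trans hCS2
    have h1σ : (0:ℝ) < 1 + σ0 := by linarith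
    have h1δ : (0:ℝ) < 1 + δ := by linarith
    rw [div_le_iff₀ h1σ] at hA
    rw [div_mul_eq_mul_div, div_mul_eq_mul_div, le_div_iff₀ h1δ] at hA
    nlinarith [hA, hσ0pos]
  have hgs : xt - xstar = -h := by rw [h_def]; abel
  rw [hgs, map_neg, inner_neg_neg, ← hq0]
  exact hfinal
end

section
/- For the step-size α_j := (λ̂ − ε − δ)(1−δ)² / ((1 + (1−δ)(λ̂ − ε − δ))·λ̂) with 0 ≤ ε, δ and 0 < ε + δ < λ̂, the function ζ(α) := α·(λ̂² − (ε+δ)·λ̂) − ω*(α·λ̂/(1−δ)) attains the value ζ(α_j) = ω((λ̂ − ε − δ)(1−δ)), where ω(τ) := τ − ln(1+τ) and ω*(τ) := −τ − ln(1−τ). -/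
theorem stmt_13 (lam eps del : ℝ) (heps : 0 ≤ eps) (hdel : 0 ≤ del) (hdel1 : del < 1)
    (hpos : 0 < eps + del) (hlt : eps + del < lam) :
    (fun α : ℝ => α * (lam ^ 2 - (eps + del) * lam)
        - (-(α * lam / (1 - del)) - Real.log (1 - α * lam / (1 - del))))
      ((lam - eps - del) * (1 - del) ^ 2 / ((1 + (1 - del) * (lam - eps - del)) * lam))
    = (lam - eps - del) * (1 - del) - Real.log (1 + (lam - eps - del) * (1 - del)) := by
  have hlam : (0:ℝ) < lam := lt_trans hpos hlt
  have h1d : (0:ℝ) < 1 - del := by linarith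
  have ht : (0:ℝ) < (lam - eps - del) * (1 - del) := mul_pos (by linarith) h1d
  have h1t : (0:ℝ) < 1 + (lam - eps - del) * (1 - del) := by linarith
  have hD : (0:ℝ) < 1 + (1 - del) * (lam - eps - del) := by nlinarith
  have hlne : lam ≠ 0 := ne_of_gt hlam
  have h1dne : (1:ℝ) - del ≠ 0 := ne_of_gt h1d
  have h1tne : (1:ℝ) + (lam - eps - del) * (1 - del) ≠ 0 := ne_of_gt h1t
  have hDne : (1:ℝ) + (1 - del) * (lam - eps - del) ≠ 0 := ne_of_gt hD
  have hα : ((lam - eps - del) * (1 - del) ^ 2 / ((1 + (1 - del) * (lam - eps - del)) * lam))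
      * lam / (1 - del) = (lam - eps - del) * (1 - del) / (1 + (lam - eps - del) * (1 - del)) := by
    field_simp
  simp only
  rw [hα]
  have h1 : 1 - (lam - eps - del) * (1 - del) / (1 + (lam - eps - del) * (1 - del))
      = 1 / (1 + (lam - eps - del) * (1 - del)) := by
    field_simp
    ring
  rw [h1, one_div, Real.log_inv]
  have h2 : ((lam - eps - del) * (1 - del) ^ 2 / ((1 + (1 - del) * (lam - eps - del)) * lam))
      * (lam ^ 2 - (eps + del) * lam)
      = (lam - eps - del) * (1 - del) * ((lam - eps - del) * (1 - del))
        / (1 + (lam - eps - del) * (1 - del)) := by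
    field_simp
    ring
  rw [h2]
  have h3 : (lam - eps - del) * (1 - del) * ((lam - eps - del) * (1 - del))
        / (1 + (lam - eps - del) * (1 - del))
      - (-((lam - eps - del) * (1 - del) / (1 + (lam - eps - del) * (1 - del)))
          - -Real.log (1 + (lam - eps - del) * (1 - del)))
      = (lam - eps - del) * (1 - del) - Real.log (1 + (lam - eps - del) * (1 - del)) := by
    field_simp
    ring
  exact h3
end

section
/- Let H, H̃ be symmetric positive definite p×p matrices with (1−δ)²·H̃ ⪯ H ⪯ (1−δ)⁻²·H̃ for some δ ∈ [0,1). Then for every vector w, the quadratic form of (H̃ − H) satisfies wᵀ(H̃ − H)H⁻¹(H̃ − H)w ≤ (2/(1−δ)² − 2)·wᵀH̃w, i.e., the dual H-norm of (H̃ − H)w is at most √(4δ − 2δ²)/(1−δ) times the H̃-norm of w. -/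
open Matrix

lemma dot_symm {p : ℕ} {M : Matrix (Fin p) (Fin p) ℝ} (hM : Mᵀ = M)
    (x y : Fin p → ℝ) : x ⬝ᵥ M *ᵥ y = y ⬝ᵥ M *ᵥ x := by
  rw [dotProduct_mulVec, ← mulVec_transpose, hM, dotProduct_comm]

lemma psd_cs {p : ℕ} {M : Matrix (Fin p) (Fin p) ℝ} (hM : M.PosSemidef)
    (x y : Fin p → ℝ) :
    (x ⬝ᵥ M *ᵥ y) ^ 2 ≤ (x ⬝ᵥ M *ᵥ x) * (y ⬝ᵥ M *ᵥ y) := by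
  have hMs : Mᵀ = M := by
    have := hM.1
    ext i j
    have := congrFun (congrFun this i) j
    simpa [Matrix.conjTranspose_apply] using this
  have key : discrim (y ⬝ᵥ M *ᵥ y) (2 * (x ⬝ᵥ M *ᵥ y)) (x ⬝ᵥ M *ᵥ x) ≤ 0 := by
    apply discrim_le_zero
    intro t
    have h0 : 0 ≤ (x + t • y) ⬝ᵥ M *ᵥ (x + t • y) := by
      have := hM.dotProduct_mulVec_nonneg (x + t • y)
      simpa using this
    have hexp : (x + t • y) ⬝ᵥ M *ᵥ (x + t • y)
        = (y ⬝ᵥ M *ᵥ y) * (t * t) + 2 * (x ⬝ᵥ M *ᵥ y) * t + x ⬝ᵥ M *ᵥ x := by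
      simp only [mulVec_add, dotProduct_add, add_dotProduct, Matrix.mulVec_smul,
        dotProduct_smul, smul_dotProduct, Matrix.smul_mulVec, smul_eq_mul,
        dot_symm hMs y x]
      ring
    linarith [hexp ▸ h0]
  rw [discrim] at key
  nlinarith [key]

open Matrix in
theorem stmt_17 {p : ℕ} (H Ht : Matrix (Fin p) (Fin p) ℝ)
    (hH : H.PosDef) (hHt : Ht.PosDef) (δ : ℝ) (hδ0 : 0 ≤ δ) (hδ1 : δ < 1)
    (hlow : (H - (1 - δ) ^ 2 • Ht).PosSemidef)
    (hup : ((((1 - δ) ^ 2)⁻¹) • Ht - H).PosSemidef) :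
    ∀ w : Fin p → ℝ,
      w ⬝ᵥ ((Ht - H) * H⁻¹ * (Ht - H)) *ᵥ w ≤ (2 / (1 - δ) ^ 2 - 2) * (w ⬝ᵥ Ht *ᵥ w) ∧
      Real.sqrt (((Ht - H) *ᵥ w) ⬝ᵥ H⁻¹ *ᵥ ((Ht - H) *ᵥ w)) ≤
        Real.sqrt (4 * δ - 2 * δ ^ 2) / (1 - δ) * Real.sqrt (w ⬝ᵥ Ht *ᵥ w) := by
  intro w
  set c : ℝ := (1 - δ) ^ 2 with hc
  have hδpos : (0:ℝ) < 1 - δ := by linarith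
  have hcpos : (0:ℝ) < c := by positivity
  -- invertibility of H
  have hHunit : IsUnit H.det := isUnit_iff_ne_zero.mpr (ne_of_gt hH.det_pos)
  have hHinv : H * H⁻¹ = 1 := Matrix.mul_nonsing_inv H hHunit
  have hinvH : H⁻¹ * H = 1 := Matrix.nonsing_inv_mul H hHunit
  -- symmetry
  have hHs : Hᵀ = H := by
    ext i j; have := congrFun (congrFun hH.1 i) j
    simpa [Matrix.conjTranspose_apply] using this
  have hHts : Htᵀ = Ht := by
    ext i j; have := congrFun (congrFun hHt.1 i) j
    simpa [Matrix.conjTranspose_apply] using this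
  -- scalar quantities
  set s : ℝ := w ⬝ᵥ Ht *ᵥ w with hs
  have hsnn : 0 ≤ s := by
    have := hHt.posSemidef.dotProduct_mulVec_nonneg w; simpa using this
  -- quadratic form bounds from hlow / hup
  have hlow' : ∀ x : Fin p → ℝ, c * (x ⬝ᵥ Ht *ᵥ x) ≤ x ⬝ᵥ H *ᵥ x := by
    intro x
    have := hlow.dotProduct_mulVec_nonneg x
    simp only [star_trivial, Matrix.sub_mulVec, Matrix.smul_mulVec,
      dotProduct_sub, dotProduct_smul, smul_eq_mul] at this
    linarith
  have hup' : ∀ x : Fin p → ℝ, x ⬝ᵥ H *ᵥ x ≤ c⁻¹ * (x ⬝ᵥ Ht *ᵥ x) := by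
    intro x
    have := hup.dotProduct_mulVec_nonneg x
    simp only [star_trivial, Matrix.sub_mulVec, Matrix.smul_mulVec,
      dotProduct_sub, dotProduct_smul, smul_eq_mul] at this
    linarith
  -- the vector u and quantity a
  set u : Fin p → ℝ := H⁻¹ *ᵥ (Ht *ᵥ w) with hu
  have hHu : H *ᵥ u = Ht *ᵥ w := by
    rw [hu, Matrix.mulVec_mulVec, hHinv, Matrix.one_mulVec]
  set a : ℝ := w ⬝ᵥ (Ht * H⁻¹ * Ht) *ᵥ w with ha
  have ha_eq : a = w ⬝ᵥ Ht *ᵥ u := by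
    rw [ha, hu, Matrix.mulVec_mulVec, Matrix.mulVec_mulVec]
  have ha_uHu : a = u ⬝ᵥ H *ᵥ u := by
    rw [ha_eq, hHu, dot_symm hHts w u, dotProduct_mulVec, ← mulVec_transpose, hHts]
  have hann : 0 ≤ a := by
    rw [ha_uHu]; have := hH.posSemidef.dotProduct_mulVec_nonneg u; simpa using this
  -- a ≤ c⁻¹ * s
  have ha_le : a ≤ c⁻¹ * s := by
    have hcs := psd_cs hHt.posSemidef w u
    have h1 : c * (u ⬝ᵥ Ht *ᵥ u) ≤ a := ha_uHu ▸ hlow' u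
    have hutu : 0 ≤ u ⬝ᵥ Ht *ᵥ u := by have := hHt.posSemidef.dotProduct_mulVec_nonneg u; simpa using this
    -- a^2 = (w ⬝ᵥ Ht *ᵥ u)^2 ≤ s * (u Ht u) ≤ s * (a / c)
    have ha2 : a ^ 2 ≤ s * (u ⬝ᵥ Ht *ᵥ u) := by rw [ha_eq]; exact hcs
    rcases eq_or_lt_of_le hann with h | h
    · rw [← h]; positivity
    · have hac : a * c ≤ s := by nlinarith
      rw [inv_mul_eq_div, le_div_iff₀ hcpos]
      exact hac
  have hh_le : w ⬝ᵥ H *ᵥ w ≤ c⁻¹ * s := hup' w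
  -- matrix identity
  have hmat : (Ht - H) * H⁻¹ * (Ht - H) = Ht * H⁻¹ * Ht - Ht - Ht + H := by
    have e1 : Ht * H⁻¹ * H = Ht := by rw [Matrix.mul_assoc, hinvH, Matrix.mul_one]
    have e2 : H * H⁻¹ * Ht = Ht := by rw [hHinv, Matrix.one_mul]
    have e3 : H * H⁻¹ * H = H := by rw [hHinv, Matrix.one_mul]
    have e0 : (Ht - H) * H⁻¹ * (Ht - H)
        = Ht * H⁻¹ * Ht - Ht * H⁻¹ * H - H * H⁻¹ * Ht + H * H⁻¹ * H := by
      noncomm_ring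
    rw [e0, e1, e2, e3]
  have hT : w ⬝ᵥ ((Ht - H) * H⁻¹ * (Ht - H)) *ᵥ w = a - 2 * s + w ⬝ᵥ H *ᵥ w := by
    rw [hmat]
    simp only [Matrix.sub_mulVec, Matrix.add_mulVec, dotProduct_sub, dotProduct_add]
    rw [← ha, ← hs]; ring
  have main : w ⬝ᵥ ((Ht - H) * H⁻¹ * (Ht - H)) *ᵥ w ≤ (2 / c - 2) * s := by
    rw [hT]
    have : 2 / c = c⁻¹ + c⁻¹ := by rw [div_eq_mul_inv]; ring
    rw [this]; linarith
  refine ⟨main, ?_⟩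
  -- second part
  have hquad : ((Ht - H) *ᵥ w) ⬝ᵥ H⁻¹ *ᵥ ((Ht - H) *ᵥ w)
      = w ⬝ᵥ ((Ht - H) * H⁻¹ * (Ht - H)) *ᵥ w := by
    have hsub : (Ht - H)ᵀ = Ht - H := by rw [Matrix.transpose_sub, hHts, hHs]
    calc ((Ht - H) *ᵥ w) ⬝ᵥ H⁻¹ *ᵥ ((Ht - H) *ᵥ w)
        = (H⁻¹ *ᵥ ((Ht - H) *ᵥ w)) ⬝ᵥ ((Ht - H) *ᵥ w) := dotProduct_comm _ _
      _ = w ⬝ᵥ (Ht - H) *ᵥ (H⁻¹ *ᵥ ((Ht - H) *ᵥ w)) := (dot_symm hsub w _).symm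
      _ = w ⬝ᵥ ((Ht - H) * H⁻¹ * (Ht - H)) *ᵥ w := by
          rw [Matrix.mulVec_mulVec, Matrix.mulVec_mulVec]
  have hcoef : 2 / c - 2 = (4 * δ - 2 * δ ^ 2) / c := by
    field_simp [hc]; ring
  rw [hquad]
  have hle : w ⬝ᵥ ((Ht - H) * H⁻¹ * (Ht - H)) *ᵥ w ≤ (4 * δ - 2 * δ ^ 2) / c * s := by
    rw [← hcoef]; exact main
  calc Real.sqrt (w ⬝ᵥ ((Ht - H) * H⁻¹ * (Ht - H)) *ᵥ w)
      ≤ Real.sqrt ((4 * δ - 2 * δ ^ 2) / c * s) := Real.sqrt_le_sqrt hle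
    _ = Real.sqrt (4 * δ - 2 * δ ^ 2) / (1 - δ) * Real.sqrt s := by
        have hnn : 0 ≤ (4 * δ - 2 * δ ^ 2) / c := by
          have : 0 ≤ 4 * δ - 2 * δ ^ 2 := by nlinarith
          positivity
        have h4 : 0 ≤ 4 * δ - 2 * δ ^ 2 := by nlinarith
        rw [Real.sqrt_mul hnn, Real.sqrt_div h4, hc, Real.sqrt_sq hδpos.le]
end
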